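/- Let ℱ be a family of connected graphs and let G be a connected graph with nm_ℱ(G) = t > 0, where nm_ℱ(G) is the largest length of an ℱ-necklace contained in G as a minor. Then any two minor models in G of ℱ-necklaces of length t must intersect (their vertex sets φ(V(N)) and φ'(V(N')) have a common vertex). -/

import Mathlib

/-- `φ` is a minor model of `H` in `G`: branch sets are connected (hence nonempty) and
pairwise disjoint, and every edge of `H` is realized by an edge of `G` between the
corresponding branch sets. -/
def IsMinorModel {V W : Type} (G : SimpleGraph V) (H : SimpleGraph W) (φ : W → Set V) :
    Prop :=
  (∀ w : W, (G.induce (φ w)).Connected) ∧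
  (∀ w₁ w₂ : W, w₁ ≠ w₂ → Disjoint (φ w₁) (φ w₂)) ∧
  (∀ w₁ w₂ : W, H.Adj w₁ w₂ → ∃ x ∈ φ w₁, ∃ y ∈ φ w₂, G.Adj x y)

/-- `H` is a minor of `G`. -/
def IsMinorOf {W V : Type} (H : SimpleGraph W) (G : SimpleGraph V) : Prop :=
  ∃ φ : W → Set V, IsMinorModel G H φ
/-- `G` is an `F`-necklace of length `t` with beads `S 0, …, S (t-1)`: the beads
partition `V(G)`, each bead induces a graph isomorphic to a member of the family `F`,
there is exactly one edge between consecutive beads, and there are no edges between any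
other pair of beads. -/
def IsNecklaceWith {V κ : Type} {β : κ → Type} (F : ∀ i : κ, SimpleGraph (β i))
    (G : SimpleGraph V) (t : ℕ) (S : Fin t → Set V) : Prop :=
  (∀ v : V, ∃ i : Fin t, v ∈ S i) ∧
  (∀ i j : Fin t, i ≠ j → Disjoint (S i) (S j)) ∧
  (∀ i : Fin t, ∃ b : κ, Nonempty ((G.induce (S i)) ≃g F b)) ∧
  (∀ i j : Fin t, (j : ℕ) = (i : ℕ) + 1 →
    ∃! p : V × V, p.1 ∈ S i ∧ p.2 ∈ S j ∧ G.Adj p.1 p.2) ∧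
  (∀ i j : Fin t, (i : ℕ) + 1 < (j : ℕ) →
    ∀ x ∈ S i, ∀ y ∈ S j, ¬ G.Adj x y)

/-- `G` is an `F`-necklace of length `t`. -/
def IsNecklace {V κ : Type} {β : κ → Type} (F : ∀ i : κ, SimpleGraph (β i))
    (G : SimpleGraph V) (t : ℕ) : Prop :=
  ∃ S : Fin t → Set V, IsNecklaceWith F G t S

/-- `G` is a uniform necklace with structure `(H, x, y)` of length `t`, with beads
`S 0, …, S (t-1)`: the beads partition `V(G)`, each bead induces a copy of `H`,
there is exactly one edge between consecutive beads and no edge between non-consecutive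
beads, and the isomorphisms can be chosen so that the unique edge between the `i`-th and
`(i+1)`-st beads joins the image of `x` in bead `i` to the image of `y` in bead `i+1`. -/
def IsUniformNecklaceWith {V W : Type} (H : SimpleGraph W) (x y : W)
    (G : SimpleGraph V) (t : ℕ) (S : Fin t → Set V) : Prop :=
  (∀ v : V, ∃ i : Fin t, v ∈ S i) ∧
  (∀ i j : Fin t, i ≠ j → Disjoint (S i) (S j)) ∧
  (∀ i j : Fin t, (j : ℕ) = (i : ℕ) + 1 →
    ∃! p : V × V, p.1 ∈ S i ∧ p.2 ∈ S j ∧ G.Adj p.1 p.2) ∧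
  (∀ i j : Fin t, (i : ℕ) + 1 < (j : ℕ) →
    ∀ a ∈ S i, ∀ b ∈ S j, ¬ G.Adj a b) ∧
  ∃ f : ∀ i : Fin t, H ≃g (G.induce (S i)),
    ∀ i j : Fin t, (j : ℕ) = (i : ℕ) + 1 →
      G.Adj ((f i) x).val ((f j) y).val
/-- Some `F`-necklace of length `t` is a minor of `G`. -/
def HasNecklaceMinor {V κ : Type} {β : κ → Type} (F : ∀ i : κ, SimpleGraph (β i))
    (G : SimpleGraph V) (t : ℕ) : Prop :=
  ∃ (W : Type) (_ : Fintype W) (N : SimpleGraph W), IsNecklace F N t ∧ IsMinorOf N G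

/-- `nm_F(G)`: the largest length of an `F`-necklace that is a minor of `G`. -/
noncomputable def necklaceMinorNumber {V κ : Type} {β : κ → Type}
    (F : ∀ i : κ, SimpleGraph (β i)) (G : SimpleGraph V) : ℕ :=
  sSup {t | HasNecklaceMinor F G t}

-- reversal
lemma necklace_rev {V κ : Type} {β : κ → Type} {F : ∀ i : κ, SimpleGraph (β i)}
    {N : SimpleGraph V} {t : ℕ} {S : Fin t → Set V} (h : IsNecklaceWith F N t S) :
    IsNecklaceWith F N t (fun k => S k.rev) := by
  obtain ⟨h1, h2, h3, h4, h5⟩ := h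
  refine ⟨?_, ?_, ?_, ?_, ?_⟩
  · intro v; obtain ⟨i, hi⟩ := h1 v; exact ⟨i.rev, by simpa using hi⟩
  · intro i j hij; exact h2 _ _ (fun hc => hij (by simpa using congrArg Fin.rev hc))
  · intro i; exact h3 i.rev
  · intro i j hij
    have hji : (i.rev : ℕ) = (j.rev : ℕ) + 1 := by
      simp only [Fin.val_rev]; omega
    obtain ⟨p, ⟨hp1, hp2, hp3⟩, hpu⟩ := h4 j.rev i.rev hji
    refine ⟨(p.2, p.1), ⟨hp2, hp1, hp3.symm⟩, ?_⟩
    rintro ⟨q1, q2⟩ ⟨hq1, hq2, hq3⟩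
    have h' := hpu (q2, q1) ⟨hq2, hq1, hq3.symm⟩
    rw [Prod.ext_iff] at h' ⊢
    exact ⟨h'.2, h'.1⟩
  · intro i j hij x hx y hy hadj
    have hji : (j.rev : ℕ) + 1 < (i.rev : ℕ) := by
      simp only [Fin.val_rev]; omega
    exact h5 j.rev i.rev hji y hy x hx hadj.symm

lemma model_finite {V W : Type} [Finite V] {G : SimpleGraph V} {H : SimpleGraph W}
    {φ : W → Set V} (h : IsMinorModel G H φ) : Finite W := by
  have hne : ∀ w, (φ w).Nonempty := by
    intro w
    have := (h.1 w).nonempty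
    obtain ⟨⟨v, hv⟩⟩ := this
    exact ⟨v, hv⟩
  choose f hf using hne
  have hinj : Function.Injective f := by
    intro w₁ w₂ hw
    by_contra hne'
    exact (h.2.1 w₁ w₂ hne').ne_of_mem (hf w₁) (hf w₂) hw
  exact Finite.of_injective f hinj

lemma model_restrict {V W : Type} {G : SimpleGraph V} {N : SimpleGraph W}
    {φ : W → Set V} (h : IsMinorModel G N φ) (U : Set W) :
    IsMinorModel G (N.induce U) (fun u => φ u.val) := by
  refine ⟨fun u => h.1 u.val, fun u₁ u₂ hne => h.2.1 _ _ (fun hc => hne (Subtype.ext hc)), ?_⟩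
  intro u₁ u₂ hadj
  exact h.2.2 _ _ hadj

-- iso between double-induce and induce
def induceInduceIso {W : Type} (N : SimpleGraph W) (U : Set W) (s : Set W) (hs : s ⊆ U) :
    ((N.induce U).induce {w : ↥U | w.val ∈ s}) ≃g (N.induce s) where
  toFun x := ⟨x.val.val, x.prop⟩
  invFun y := ⟨⟨y.val, hs y.prop⟩, y.prop⟩
  left_inv := fun x => rfl
  right_inv := fun y => rfl
  map_rel_iff' := Iff.rfl

lemma necklace_prefix {W κ : Type} {β : κ → Type} {F : ∀ i : κ, SimpleGraph (β i)}
    {N : SimpleGraph W} {t : ℕ} {S : Fin t → Set W} (h : IsNecklaceWith F N t S)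
    (a : ℕ) (ha : a ≤ t) :
    IsNecklaceWith F (N.induce (⋃ k : Fin a, S (Fin.castLE ha k))) a
      (fun k => {w : ↥(⋃ k : Fin a, S (Fin.castLE ha k)) | w.val ∈ S (Fin.castLE ha k)}) := by
  obtain ⟨h1, h2, h3, h4, h5⟩ := h
  set U := ⋃ k : Fin a, S (Fin.castLE ha k) with hU
  have hsub : ∀ k : Fin a, S (Fin.castLE ha k) ⊆ U := fun k =>
    Set.subset_iUnion (fun k : Fin a => S (Fin.castLE ha k)) k
  refine ⟨?_, ?_, ?_, ?_, ?_⟩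
  · rintro ⟨v, hv⟩
    obtain ⟨sv, ⟨k, rfl⟩, hvs⟩ := hv
    exact ⟨k, hvs⟩
  · intro i j hij
    rw [Set.disjoint_left]
    rintro ⟨v, hv⟩ hvi hvj
    exact (h2 _ _ (fun hc => hij (Fin.castLE_injective ha hc))).ne_of_mem hvi hvj rfl
  · intro i
    obtain ⟨b, ⟨e⟩⟩ := h3 (Fin.castLE ha i)
    exact ⟨b, ⟨(induceInduceIso N U _ (hsub i)).trans e⟩⟩
  · intro i j hij
    have hij' : ((Fin.castLE ha j : Fin t) : ℕ) = ((Fin.castLE ha i : Fin t) : ℕ) + 1 := hij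
    obtain ⟨p, ⟨hp1, hp2, hp3⟩, hpu⟩ := h4 _ _ hij'
    refine ⟨(⟨p.1, hsub i hp1⟩, ⟨p.2, hsub j hp2⟩), ⟨hp1, hp2, hp3⟩, ?_⟩
    rintro ⟨q1, q2⟩ ⟨hq1, hq2, hq3⟩
    have h' := hpu (q1.val, q2.val) ⟨hq1, hq2, hq3⟩
    rw [Prod.ext_iff] at h' ⊢
    exact ⟨Subtype.ext h'.1, Subtype.ext h'.2⟩
  · intro i j hij x hx y hy hadj
    exact h5 (Fin.castLE ha i) (Fin.castLE ha j) hij x.val hx y.val hy hadj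

def joinGraph {W1 W2 : Type} (N1 : SimpleGraph W1) (N2 : SimpleGraph W2)
    (w₁ : W1) (w₂ : W2) : SimpleGraph (W1 ⊕ W2) where
  Adj x y := match x, y with
    | .inl a, .inl b => N1.Adj a b
    | .inl a, .inr b => a = w₁ ∧ b = w₂
    | .inr a, .inl b => b = w₁ ∧ a = w₂
    | .inr a, .inr b => N2.Adj a b
  symm := by
    constructor
    rintro (a | a) (b | b) h
    · exact h.symm
    · exact ⟨h.1, h.2⟩
    · exact ⟨h.1, h.2⟩
    · exact h.symm
  loopless := by
    constructor
    rintro (a | a) h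
    · exact N1.loopless.irrefl a h
    · exact N2.loopless.irrefl a h

@[simp] lemma joinGraph_adj_inl_inl {W1 W2 : Type} {N1 : SimpleGraph W1} {N2 : SimpleGraph W2}
    {w₁ : W1} {w₂ : W2} {a b : W1} :
    (joinGraph N1 N2 w₁ w₂).Adj (.inl a) (.inl b) ↔ N1.Adj a b := Iff.rfl

@[simp] lemma joinGraph_adj_inr_inr {W1 W2 : Type} {N1 : SimpleGraph W1} {N2 : SimpleGraph W2}
    {w₁ : W1} {w₂ : W2} {a b : W2} :
    (joinGraph N1 N2 w₁ w₂).Adj (.inr a) (.inr b) ↔ N2.Adj a b := Iff.rfl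

@[simp] lemma joinGraph_adj_inl_inr {W1 W2 : Type} {N1 : SimpleGraph W1} {N2 : SimpleGraph W2}
    {w₁ : W1} {w₂ : W2} {a : W1} {b : W2} :
    (joinGraph N1 N2 w₁ w₂).Adj (.inl a) (.inr b) ↔ a = w₁ ∧ b = w₂ := Iff.rfl

@[simp] lemma joinGraph_adj_inr_inl {W1 W2 : Type} {N1 : SimpleGraph W1} {N2 : SimpleGraph W2}
    {w₁ : W1} {w₂ : W2} {a : W2} {b : W1} :
    (joinGraph N1 N2 w₁ w₂).Adj (.inr a) (.inl b) ↔ b = w₁ ∧ a = w₂ := Iff.rfl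

/-- Iso between the induced subgraph on an `inl`-image and the original induced subgraph. -/
noncomputable def induceSumLeftIso {W1 W2 : Type} (N3 : SimpleGraph (W1 ⊕ W2))
    (N1 : SimpleGraph W1) (hadj : ∀ a b : W1, N3.Adj (.inl a) (.inl b) ↔ N1.Adj a b)
    (s : Set W1) : (N3.induce (Sum.inl '' s)) ≃g (N1.induce s) := by
  refine ⟨(Equiv.Set.image Sum.inl s Sum.inl_injective).symm, ?_⟩
  rintro ⟨x, hx⟩ ⟨y, hy⟩
  obtain ⟨x', hx', rfl⟩ := hx
  obtain ⟨y', hy', rfl⟩ := hy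
  simp only [SimpleGraph.comap_adj, Function.Embedding.coe_subtype]
  rw [show ((Equiv.Set.image Sum.inl s Sum.inl_injective).symm
      ⟨Sum.inl x', ⟨x', hx', rfl⟩⟩ : ↥s) = ⟨x', hx'⟩ from
    (Equiv.symm_apply_eq _).2 (Subtype.ext rfl)]
  rw [show ((Equiv.Set.image Sum.inl s Sum.inl_injective).symm
      ⟨Sum.inl y', ⟨y', hy', rfl⟩⟩ : ↥s) = ⟨y', hy'⟩ from
    (Equiv.symm_apply_eq _).2 (Subtype.ext rfl)]
  exact (hadj x' y').symm

noncomputable def induceSumRightIso {W1 W2 : Type} (N3 : SimpleGraph (W1 ⊕ W2))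
    (N2 : SimpleGraph W2) (hadj : ∀ a b : W2, N3.Adj (.inr a) (.inr b) ↔ N2.Adj a b)
    (s : Set W2) : (N3.induce (Sum.inr '' s)) ≃g (N2.induce s) := by
  refine ⟨(Equiv.Set.image Sum.inr s Sum.inr_injective).symm, ?_⟩
  rintro ⟨x, hx⟩ ⟨y, hy⟩
  obtain ⟨x', hx', rfl⟩ := hx
  obtain ⟨y', hy', rfl⟩ := hy
  simp only [SimpleGraph.comap_adj, Function.Embedding.coe_subtype]
  rw [show ((Equiv.Set.image Sum.inr s Sum.inr_injective).symm
      ⟨Sum.inr x', ⟨x', hx', rfl⟩⟩ : ↥s) = ⟨x', hx'⟩ from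
    (Equiv.symm_apply_eq _).2 (Subtype.ext rfl)]
  rw [show ((Equiv.Set.image Sum.inr s Sum.inr_injective).symm
      ⟨Sum.inr y', ⟨y', hy', rfl⟩⟩ : ↥s) = ⟨y', hy'⟩ from
    (Equiv.symm_apply_eq _).2 (Subtype.ext rfl)]
  exact (hadj x' y').symm

lemma necklace_join {W1 W2 κ : Type} {β : κ → Type} {F : ∀ i : κ, SimpleGraph (β i)}
    {N1 : SimpleGraph W1} {N2 : SimpleGraph W2} {a b : ℕ} {S1 : Fin a → Set W1}
    {S2 : Fin b → Set W2} (h1 : IsNecklaceWith F N1 a S1) (h2 : IsNecklaceWith F N2 b S2)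
    (ha : 0 < a) (hb : 0 < b) (w₁ : W1) (w₂ : W2)
    (hw₁ : w₁ ∈ S1 ⟨a - 1, by omega⟩) (hw₂ : w₂ ∈ S2 ⟨0, hb⟩) :
    IsNecklaceWith F (joinGraph N1 N2 w₁ w₂) (a + b)
      (fun k => {x : W1 ⊕ W2 | match x with
        | .inl u => ∃ h : (k : ℕ) < a, u ∈ S1 ⟨(k : ℕ), h⟩
        | .inr u => ∃ _ : a ≤ (k : ℕ), u ∈ S2 ⟨(k : ℕ) - a, by omega⟩}) := by
  refine ⟨?_, ?_, ?_, ?_, ?_⟩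
  · rintro (u | u)
    · obtain ⟨i, hi⟩ := h1.1 u
      refine ⟨⟨i.val, by omega⟩, i.isLt, ?_⟩
      rwa [show (⟨i.val, i.isLt⟩ : Fin a) = i from Fin.mk_eq_mk.2 rfl]
    · obtain ⟨i, hi⟩ := h2.1 u
      refine ⟨⟨a + i.val, by omega⟩, Nat.le_add_right a i.val, ?_⟩
      rwa [show (⟨a + i.val - a, by omega⟩ : Fin b) = i from Fin.mk_eq_mk.2 (by omega)]
  · intro i j hij
    rw [Set.disjoint_left]
    rintro (u | u) hi hj
    · obtain ⟨hia, hiu⟩ := hi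
      obtain ⟨hja, hju⟩ := hj
      have hne : (⟨i.val, hia⟩ : Fin a) ≠ ⟨j.val, hja⟩ := by
        intro hc
        exact hij (Fin.ext (by simpa [Fin.ext_iff] using hc))
      exact (h1.2.1 _ _ hne).ne_of_mem hiu hju rfl
    · obtain ⟨hia, hiu⟩ := hi
      obtain ⟨hja, hju⟩ := hj
      have hne : (⟨i.val - a, by omega⟩ : Fin b) ≠ ⟨j.val - a, by omega⟩ := by
        intro hc
        exact hij (Fin.ext (by simp [Fin.ext_iff] at hc ⊢; omega))
      exact (h2.2.1 _ _ hne).ne_of_mem hiu hju rfl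
  · intro k
    by_cases hk : (k : ℕ) < a
    · have hset : {x : W1 ⊕ W2 | match x with
          | .inl u => ∃ h : (k : ℕ) < a, u ∈ S1 ⟨(k : ℕ), h⟩
          | .inr u => ∃ _ : a ≤ (k : ℕ), u ∈ S2 ⟨(k : ℕ) - a, by omega⟩}
          = Sum.inl '' S1 ⟨(k : ℕ), hk⟩ := by
        ext x
        cases x with
        | inl u =>
          simp only [Set.mem_setOf_eq, Set.mem_image]
          constructor
          · rintro ⟨h, hu⟩; exact ⟨u, hu, rfl⟩
          · rintro ⟨u', hu', heq⟩
            cases heq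
            exact ⟨hk, hu'⟩
        | inr u =>
          simp only [Set.mem_setOf_eq, Set.mem_image]
          constructor
          · rintro ⟨h, -⟩; omega
          · rintro ⟨u', -, heq⟩; cases heq
      obtain ⟨c, ⟨e⟩⟩ := h1.2.2.1 ⟨(k : ℕ), hk⟩
      refine ⟨c, ⟨?_⟩⟩
      rw [show (fun k : Fin (a+b) => {x : W1 ⊕ W2 | match x with
          | .inl u => ∃ h : (k : ℕ) < a, u ∈ S1 ⟨(k : ℕ), h⟩
          | .inr u => ∃ _ : a ≤ (k : ℕ), u ∈ S2 ⟨(k : ℕ) - a, by omega⟩}) k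
          = Sum.inl '' S1 ⟨(k : ℕ), hk⟩ from hset]
      exact (induceSumLeftIso _ N1 (fun _ _ => Iff.rfl) _).trans e
    · have hk' : a ≤ (k : ℕ) := by omega
      have hset : {x : W1 ⊕ W2 | match x with
          | .inl u => ∃ h : (k : ℕ) < a, u ∈ S1 ⟨(k : ℕ), h⟩
          | .inr u => ∃ _ : a ≤ (k : ℕ), u ∈ S2 ⟨(k : ℕ) - a, by omega⟩}
          = Sum.inr '' S2 ⟨(k : ℕ) - a, by omega⟩ := by
        ext x
        cases x with
        | inl u =>
          simp only [Set.mem_setOf_eq, Set.mem_image]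
          constructor
          · rintro ⟨h, -⟩; omega
          · rintro ⟨u', -, heq⟩; cases heq
        | inr u =>
          simp only [Set.mem_setOf_eq, Set.mem_image]
          constructor
          · rintro ⟨h, hu⟩; exact ⟨u, hu, rfl⟩
          · rintro ⟨u', hu', heq⟩
            cases heq
            exact ⟨hk', hu'⟩
      obtain ⟨c, ⟨e⟩⟩ := h2.2.2.1 ⟨(k : ℕ) - a, by omega⟩
      refine ⟨c, ⟨?_⟩⟩
      rw [show (fun k : Fin (a+b) => {x : W1 ⊕ W2 | match x with
          | .inl u => ∃ h : (k : ℕ) < a, u ∈ S1 ⟨(k : ℕ), h⟩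
          | .inr u => ∃ _ : a ≤ (k : ℕ), u ∈ S2 ⟨(k : ℕ) - a, by omega⟩}) k
          = Sum.inr '' S2 ⟨(k : ℕ) - a, by omega⟩ from hset]
      exact (induceSumRightIso _ N2 (fun _ _ => Iff.rfl) _).trans e
  · intro i j hij
    by_cases hja : (j : ℕ) < a
    · have hia : (i : ℕ) < a := by omega
      obtain ⟨p, ⟨hp1, hp2, hp3⟩, hpu⟩ := h1.2.2.2.1 ⟨i.val, hia⟩ ⟨j.val, hja⟩ hij
      refine ⟨(.inl p.1, .inl p.2), ⟨⟨hia, hp1⟩, ⟨hja, hp2⟩, hp3⟩, ?_⟩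
      rintro ⟨(q1 | q1), (q2 | q2)⟩ ⟨hq1, hq2, hq3⟩
      · obtain ⟨hh1, hq1'⟩ := hq1
        obtain ⟨hh2, hq2'⟩ := hq2
        have h' := hpu (q1, q2) ⟨hq1', hq2', hq3⟩
        rw [Prod.ext_iff] at h' ⊢
        exact ⟨congrArg Sum.inl h'.1, congrArg Sum.inl h'.2⟩
      · obtain ⟨h', -⟩ := hq2; omega
      · obtain ⟨h', -⟩ := hq1; omega
      · obtain ⟨h', -⟩ := hq1; omega
    · by_cases hia : (i : ℕ) < a
      · -- the crossing pair
        have hival : (i : ℕ) = a - 1 := by omega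
        have hjval : (j : ℕ) = a := by omega
        refine ⟨(.inl w₁, .inr w₂), ⟨⟨hia, ?_⟩, ⟨by omega, ?_⟩, ⟨rfl, rfl⟩⟩, ?_⟩
        · rwa [show (⟨(i : ℕ), hia⟩ : Fin a) = ⟨a - 1, by omega⟩ from Fin.mk_eq_mk.2 (by omega)]
        · rwa [show (⟨(j : ℕ) - a, by omega⟩ : Fin b) = ⟨0, hb⟩ from Fin.mk_eq_mk.2 (by omega)]
        · rintro ⟨(q1 | q1), (q2 | q2)⟩ ⟨hq1, hq2, hq3⟩
          · obtain ⟨h', -⟩ := hq2; omega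
          · obtain ⟨rfl, rfl⟩ := hq3; rfl
          · obtain ⟨h', -⟩ := hq1; omega
          · obtain ⟨h', -⟩ := hq1; omega
      · have hia' : a ≤ (i : ℕ) := by omega
        obtain ⟨p, ⟨hp1, hp2, hp3⟩, hpu⟩ := h2.2.2.2.1 ⟨(i : ℕ) - a, by omega⟩
          ⟨(j : ℕ) - a, by omega⟩ (show (j:ℕ) - a = (i:ℕ) - a + 1 by omega)
        refine ⟨(.inr p.1, .inr p.2), ⟨⟨hia', hp1⟩, ⟨by omega, ?_⟩, hp3⟩, ?_⟩
        · rwa [show (⟨(j : ℕ) - a, by omega⟩ : Fin b) = ⟨(i : ℕ) - a + 1, by omega⟩ from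
            Fin.mk_eq_mk.2 (by omega)] at hp2 ⊢
        · rintro ⟨(q1 | q1), (q2 | q2)⟩ ⟨hq1, hq2, hq3⟩
          · obtain ⟨h', -⟩ := hq1; omega
          · obtain ⟨h', -⟩ := hq1; omega
          · obtain ⟨h', -⟩ := hq2; omega
          · obtain ⟨hh1, hq1'⟩ := hq1
            obtain ⟨hh2, hq2'⟩ := hq2
            have hq2'' : q2 ∈ S2 ⟨(i : ℕ) - a + 1, by omega⟩ := by
              rwa [show (⟨(j : ℕ) - a, by omega⟩ : Fin b) = ⟨(i : ℕ) - a + 1, by omega⟩ from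
                Fin.mk_eq_mk.2 (by omega)] at hq2'
            have h' := hpu (q1, q2) ⟨hq1', by
              rwa [show (⟨(j : ℕ) - a, by omega⟩ : Fin b) = ⟨(i : ℕ) - a + 1, by omega⟩ from
                Fin.mk_eq_mk.2 (by omega)] , hq3⟩
            rw [Prod.ext_iff] at h' ⊢
            exact ⟨congrArg Sum.inr h'.1, congrArg Sum.inr h'.2⟩
  · intro i j hij
    rintro (x | x) hx (y | y) hy hadj
    · obtain ⟨hia, hx'⟩ := hx
      obtain ⟨hja, hy'⟩ := hy
      exact h1.2.2.2.2 ⟨(i : ℕ), hia⟩ ⟨(j : ℕ), hja⟩ hij x hx' y hy' hadj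
    · obtain ⟨rfl, rfl⟩ := hadj
      obtain ⟨hia, hx'⟩ := hx
      obtain ⟨hja, hy'⟩ := hy
      have hi1 : (⟨(i : ℕ), hia⟩ : Fin a) = ⟨a - 1, by omega⟩ := by
        by_contra hc
        exact (h1.2.1 _ _ hc).ne_of_mem hx' hw₁ rfl
      have hj1 : (⟨(j : ℕ) - a, by omega⟩ : Fin b) = ⟨0, hb⟩ := by
        by_contra hc
        exact (h2.2.1 _ _ hc).ne_of_mem hy' hw₂ rfl
      rw [Fin.ext_iff] at hi1 hj1
      simp only at hi1 hj1
      omega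
    · obtain ⟨hia, -⟩ := hx
      obtain ⟨hja, -⟩ := hy
      omega
    · obtain ⟨hia, hx'⟩ := hx
      obtain ⟨hja, hy'⟩ := hy
      exact h2.2.2.2.2 ⟨(i : ℕ) - a, by omega⟩ ⟨(j : ℕ) - a, by omega⟩ (show (i:ℕ) - a + 1 < (j:ℕ) - a by omega)
        x hx' y hy' hadj

lemma model_join {V W1 W2 : Type} {G : SimpleGraph V} {N1 : SimpleGraph W1}
    {N2 : SimpleGraph W2} {ψ1 : W1 → Set V} {ψ2 : W2 → Set V} {w₁ : W1} {w₂ : W2}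
    (hm1 : IsMinorModel G N1 ψ1) (hm2 : IsMinorModel G N2 ψ2) (I : Set V)
    (hIconn : (G.induce (ψ1 w₁ ∪ I)).Connected)
    (hI1 : ∀ u, Disjoint I (ψ1 u)) (hI2 : ∀ v, Disjoint I (ψ2 v))
    (hAB : ∀ u v, Disjoint (ψ1 u) (ψ2 v))
    (hedge : ∃ x ∈ ψ1 w₁ ∪ I, ∃ y ∈ ψ2 w₂, G.Adj x y) :
    IsMinorModel G (joinGraph N1 N2 w₁ w₂)
      (fun x => match x with
        | .inl u => ψ1 u ∪ {v | v ∈ I ∧ u = w₁}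
        | .inr v => ψ2 v) := by
  have hCsub : ∀ u : W1, {v | v ∈ I ∧ u = w₁} ⊆ I := fun u v hv => hv.1
  refine ⟨?_, ?_, ?_⟩
  · rintro (u | u)
    · by_cases h : u = w₁
      · subst h
        have hset : ψ1 u ∪ {v | v ∈ I ∧ u = u} = ψ1 u ∪ I := by
          ext v; simp
        show (G.induce (ψ1 u ∪ {v | v ∈ I ∧ u = u})).Connected
        rw [hset]
        exact hIconn
      · have hset : ψ1 u ∪ {v | v ∈ I ∧ u = w₁} = ψ1 u := by
          ext v; simp [h]
        show (G.induce (ψ1 u ∪ {v | v ∈ I ∧ u = w₁})).Connected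
        rw [hset]
        exact hm1.1 u
    · exact hm2.1 u
  · rintro (u1 | u1) (u2 | u2) hne
    · have hne' : u1 ≠ u2 := fun hc => hne (congrArg Sum.inl hc)
      rw [Set.disjoint_left]
      rintro v (hv | ⟨hvI, heq1⟩) hv2
      · rcases hv2 with hw | ⟨hwI, heq2⟩
        · exact (hm1.2.1 _ _ hne').ne_of_mem hv hw rfl
        · exact (hI1 u1).ne_of_mem hwI hv rfl
      · rcases hv2 with hw | ⟨hwI, heq2⟩
        · exact (hI1 u2).ne_of_mem hvI hw rfl
        · exact hne' (heq1.trans heq2.symm)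
    · refine Set.disjoint_union_left.2 ⟨hAB u1 u2, (hI2 u2).mono_left (hCsub u1)⟩
    · refine Set.disjoint_union_right.2 ⟨(hAB u2 u1).symm, ((hI2 u1).mono_left (hCsub u2)).symm⟩
    · exact hm2.2.1 _ _ (fun hc => hne (congrArg Sum.inr hc))
  · rintro (u1 | u1) (u2 | u2) hadj
    · obtain ⟨x, hx, y, hy, hxy⟩ := hm1.2.2 _ _ hadj
      exact ⟨x, Or.inl hx, y, Or.inl hy, hxy⟩
    · obtain ⟨rfl, rfl⟩ := hadj
      obtain ⟨x, hx, y, hy, hxy⟩ := hedge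
      refine ⟨x, ?_, y, hy, hxy⟩
      rcases hx with hx | hx
      · exact Or.inl hx
      · exact Or.inr ⟨hx, rfl⟩
    · obtain ⟨rfl, rfl⟩ := hadj
      obtain ⟨x, hx, y, hy, hxy⟩ := hedge
      refine ⟨y, hy, x, ?_, hxy.symm⟩
      rcases hx with hx | hx
      · exact Or.inl hx
      · exact Or.inr ⟨hx, rfl⟩
    · obtain ⟨x, hx, y, hy, hxy⟩ := hm2.2.2 _ _ hadj
      exact ⟨x, hx, y, hy, hxy⟩

lemma exists_connector {V : Type} {G : SimpleGraph V} (hG : G.Connected)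
    {A B : Set V} (hA : A.Nonempty) (hB : B.Nonempty) (hd : Disjoint A B) :
    ∃ (x y : V) (I : Set V), x ∈ A ∧ y ∈ B ∧ Disjoint I (A ∪ B) ∧
      (G.induce ({x} ∪ I)).Connected ∧ ∃ z ∈ ({x} : Set V) ∪ I, G.Adj z y := by
  classical
  obtain ⟨x₀, hx₀⟩ := hA
  obtain ⟨y₀, hy₀⟩ := hB
  have hP : ∃ n, ∃ x ∈ A, ∃ y ∈ B, ∃ p : G.Walk x y, p.length = n := by
    obtain ⟨p⟩ := hG.preconnected x₀ y₀
    exact ⟨p.length, x₀, hx₀, y₀, hy₀, p, rfl⟩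
  obtain ⟨x, hx, y, hy, p, hp⟩ := Nat.find_spec hP
  have c1 : ∀ v (hv : v ∈ p.support), v ∈ A → v = x := by
    intro v hv hvA
    have h1 : Nat.find hP ≤ (p.dropUntil v hv).length :=
      Nat.find_min' hP ⟨v, hvA, y, hy, p.dropUntil v hv, rfl⟩
    have h2 : (p.takeUntil v hv).length + (p.dropUntil v hv).length = p.length := by
      have := congrArg SimpleGraph.Walk.length (p.take_spec hv)
      rwa [SimpleGraph.Walk.length_append] at this
    have h3 : (p.takeUntil v hv).length = 0 := by omega
    exact (SimpleGraph.Walk.eq_of_length_eq_zero h3).symm ▸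
      (SimpleGraph.Walk.eq_of_length_eq_zero h3).symm
  have c2 : ∀ v (hv : v ∈ p.support), v ∈ B → v = y := by
    intro v hv hvB
    have h1 : Nat.find hP ≤ (p.takeUntil v hv).length :=
      Nat.find_min' hP ⟨x, hx, v, hvB, p.takeUntil v hv, rfl⟩
    have h2 : (p.takeUntil v hv).length + (p.dropUntil v hv).length = p.length := by
      have := congrArg SimpleGraph.Walk.length (p.take_spec hv)
      rwa [SimpleGraph.Walk.length_append] at this
    have h3 : (p.dropUntil v hv).length = 0 := by omega
    exact SimpleGraph.Walk.eq_of_length_eq_zero h3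
  have hxy : x ≠ y := fun h => (hd.ne_of_mem hx hy) h
  have hn1 : 1 ≤ p.length := by
    rcases Nat.eq_zero_or_pos p.length with h | h
    · exact absurd (SimpleGraph.Walk.eq_of_length_eq_zero h) hxy
    · exact h
  obtain ⟨z, hyz, r, hr⟩ := SimpleGraph.Walk.exists_eq_cons_of_ne (Ne.symm hxy) p.reverse
  have hrlen : r.length = p.length - 1 := by
    have := congrArg SimpleGraph.Walk.length hr
    rw [SimpleGraph.Walk.length_reverse, SimpleGraph.Walk.length_cons] at this
    omega
  have hrsupp : ∀ v, v ∈ r.support → v ∈ p.support := by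
    intro v hv
    have h1 : v ∈ p.reverse.support := by
      rw [hr, SimpleGraph.Walk.support_cons]
      exact List.mem_cons_of_mem _ hv
    rwa [SimpleGraph.Walk.support_reverse, List.mem_reverse] at h1
  have hynr : y ∉ r.support := by
    intro hyr
    have hlt : ((r.dropUntil y hyr).reverse).length < Nat.find hP := by
      rw [SimpleGraph.Walk.length_reverse]
      have := SimpleGraph.Walk.length_dropUntil_le r hyr
      omega
    exact Nat.find_min hP hlt ⟨x, hx, y, hy, (r.dropUntil y hyr).reverse, rfl⟩
  set q : G.Walk x z := r.reverse with hq
  have hqsupp : ∀ v, v ∈ q.support ↔ v ∈ r.support := by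
    intro v
    rw [hq, SimpleGraph.Walk.support_reverse, List.mem_reverse]
  refine ⟨x, y, {v | v ∈ q.support ∧ v ∉ A}, hx, hy, ?_, ?_, ?_⟩
  · rw [Set.disjoint_left]
    rintro v ⟨hvq, hvA⟩ (hvA' | hvB')
    · exact hvA hvA'
    · have := c2 v (hrsupp v ((hqsupp v).1 hvq)) hvB'
      subst this
      exact hynr ((hqsupp v).1 hvq)
  · have hset : ({x} : Set V) ∪ {v | v ∈ q.support ∧ v ∉ A} = {v | v ∈ q.support} := by
      ext v
      simp only [Set.mem_union, Set.mem_singleton_iff, Set.mem_setOf_eq]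
      constructor
      · rintro (rfl | ⟨hv, -⟩)
        · exact q.start_mem_support
        · exact hv
      · intro hv
        by_cases hvA : v ∈ A
        · exact Or.inl (c1 v (hrsupp v ((hqsupp v).1 hv)) hvA)
        · exact Or.inr ⟨hv, hvA⟩
    rw [hset]
    exact q.connected_induce_support
  · refine ⟨z, ?_, hyz.symm⟩
    by_cases hzA : z ∈ A
    · exact Or.inl (c1 z (hrsupp z ((hqsupp z).1 q.end_mem_support)) hzA)
    · exact Or.inr ⟨q.end_mem_support, hzA⟩

lemma necklace_prefix_last {W κ : Type} {β : κ → Type} {F : ∀ i : κ, SimpleGraph (β i)}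
    {N : SimpleGraph W} {t : ℕ} {S : Fin t → Set W} (h : IsNecklaceWith F N t S)
    {w : W} {i : Fin t} (hw : w ∈ S i) :
    ∃ (U : Set W) (T : Fin (i.val + 1) → Set ↥U) (hwU : w ∈ U),
      IsNecklaceWith F (N.induce U) (i.val + 1) T ∧
      (⟨w, hwU⟩ : ↥U) ∈ T ⟨i.val, Nat.lt_succ_self _⟩ := by
  have hle : i.val + 1 ≤ t := i.isLt
  have hcast : Fin.castLE hle ⟨i.val, Nat.lt_succ_self _⟩ = i := Fin.ext rfl
  refine ⟨_, _, ?_, necklace_prefix h (i.val + 1) hle, ?_⟩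
  · exact Set.mem_iUnion.2 ⟨⟨i.val, Nat.lt_succ_self _⟩, by rwa [hcast]⟩
  · show w ∈ S (Fin.castLE hle ⟨i.val, Nat.lt_succ_self _⟩)
    rwa [hcast]

lemma necklace_orient {W κ : Type} {β : κ → Type} {F : ∀ i : κ, SimpleGraph (β i)}
    {N : SimpleGraph W} {t : ℕ} {S : Fin t → Set W} (h : IsNecklaceWith F N t S)
    {w : W} {i : Fin t} (hw : w ∈ S i) :
    ∃ (a : ℕ) (ha : 0 < a) (_ : t + 1 ≤ 2 * a) (U : Set W) (T : Fin a → Set ↥U)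
      (hwU : w ∈ U),
      IsNecklaceWith F (N.induce U) a T ∧ (⟨w, hwU⟩ : ↥U) ∈ T ⟨a - 1, by omega⟩ := by
  by_cases hcase : t + 1 ≤ 2 * (i.val + 1)
  · obtain ⟨U, T, hwU, hne, hmem⟩ := necklace_prefix_last h hw
    refine ⟨i.val + 1, Nat.succ_pos _, hcase, U, T, hwU, hne, ?_⟩
    rwa [show (⟨i.val + 1 - 1, by omega⟩ : Fin (i.val + 1)) = ⟨i.val, Nat.lt_succ_self _⟩
      from Fin.mk_eq_mk.2 (by omega)]
  · have hwrev : w ∈ (fun k : Fin t => S k.rev) i.rev := by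
      show w ∈ S i.rev.rev
      rwa [Fin.rev_rev]
    obtain ⟨U, T, hwU, hne, hmem⟩ := necklace_prefix_last (necklace_rev h) hwrev
    have hrv : i.rev.val = t - 1 - i.val := by simp [Fin.val_rev]; omega
    refine ⟨i.rev.val + 1, Nat.succ_pos _, by omega, U, T, hwU, hne, ?_⟩
    rwa [show (⟨i.rev.val + 1 - 1, by omega⟩ : Fin (i.rev.val + 1))
      = ⟨i.rev.val, Nat.lt_succ_self _⟩ from Fin.mk_eq_mk.2 (by omega)]

theorem stmt16 (V κ : Type) [Fintype V] (β : κ → Type)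
    (F : ∀ i : κ, SimpleGraph (β i)) (hFconn : ∀ i, (F i).Connected)
    (G : SimpleGraph V) (hG : G.Connected) (t : ℕ) (ht : 0 < t)
    (hnm : necklaceMinorNumber F G = t) :
    ∀ (W : Type) (N : SimpleGraph W), IsNecklace F N t →
    ∀ (W' : Type) (N' : SimpleGraph W'), IsNecklace F N' t →
    ∀ (φ : W → Set V) (φ' : W' → Set V),
      IsMinorModel G N φ → IsMinorModel G N' φ' →
      ((⋃ w : W, φ w) ∩ (⋃ w : W', φ' w)).Nonempty := by
  intro W N hN W' N' hN' φ φ' hm hm'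
  by_contra hempty
  rw [Set.not_nonempty_iff_eq_empty] at hempty
  have hd : Disjoint (⋃ w : W, φ w) (⋃ w : W', φ' w) :=
    Set.disjoint_iff_inter_eq_empty.2 hempty
  obtain ⟨S, hS⟩ := hN
  obtain ⟨S', hS'⟩ := hN'
  -- nonemptiness of the two unions
  have hbranch : ∀ w : W, (φ w).Nonempty := by
    intro w
    obtain ⟨⟨v, hv⟩⟩ := (hm.1 w).nonempty
    exact ⟨v, hv⟩
  have hbranch' : ∀ w : W', (φ' w).Nonempty := by
    intro w
    obtain ⟨⟨v, hv⟩⟩ := (hm'.1 w).nonempty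
    exact ⟨v, hv⟩
  have hWne : Nonempty W := by
    obtain ⟨c, ⟨e⟩⟩ := hS.2.2.1 ⟨0, ht⟩
    obtain ⟨v⟩ := (hFconn c).nonempty
    exact ⟨(e.toEquiv.symm v).val⟩
  have hWne' : Nonempty W' := by
    obtain ⟨c, ⟨e⟩⟩ := hS'.2.2.1 ⟨0, ht⟩
    obtain ⟨v⟩ := (hFconn c).nonempty
    exact ⟨(e.toEquiv.symm v).val⟩
  have hAne : (⋃ w : W, φ w).Nonempty := by
    obtain ⟨w⟩ := hWne
    obtain ⟨v, hv⟩ := hbranch w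
    exact ⟨v, Set.mem_iUnion.2 ⟨w, hv⟩⟩
  have hBne : (⋃ w : W', φ' w).Nonempty := by
    obtain ⟨w⟩ := hWne'
    obtain ⟨v, hv⟩ := hbranch' w
    exact ⟨v, Set.mem_iUnion.2 ⟨w, hv⟩⟩
  -- connector
  obtain ⟨x, y, I, hx, hy, hId, hIconn, z, hz, hzy⟩ := exists_connector hG hAne hBne hd
  obtain ⟨w, hw⟩ := Set.mem_iUnion.1 hx
  obtain ⟨w', hw'⟩ := Set.mem_iUnion.1 hy
  obtain ⟨i, hi⟩ := hS.1 w
  obtain ⟨j, hj⟩ := hS'.1 w'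
  -- orient the two necklaces
  obtain ⟨a, ha, h2a, U, T, hwU, hT, hTm⟩ := necklace_orient hS hi
  obtain ⟨b, hb, h2b, U', T', hwU', hT', hTm'⟩ := necklace_orient hS' hj
  have hT'' := necklace_rev hT'
  have hTm'' : (⟨w', hwU'⟩ : ↥U') ∈ (fun k : Fin b => T' k.rev) ⟨0, hb⟩ := by
    show _ ∈ T' (Fin.rev ⟨0, hb⟩)
    rwa [show (Fin.rev ⟨0, hb⟩ : Fin b) = ⟨b - 1, by omega⟩ from
      Fin.ext (by simp [Fin.val_rev])]
  -- joined necklace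
  have hjoin := necklace_join hT hT'' ha hb ⟨w, hwU⟩ ⟨w', hwU'⟩ hTm hTm''
  -- joined model
  have hmU := model_restrict hm U
  have hmU' := model_restrict hm' U'
  have hIconn2 : (G.induce (φ w ∪ I)).Connected := by
    have hconn := SimpleGraph.induce_union_connected (hm.1 w).preconnected hIconn.preconnected
      ⟨x, hw, Or.inl rfl⟩
    have hset : φ w ∪ ({x} ∪ I) = φ w ∪ I := by
      rw [← Set.union_assoc, Set.union_eq_self_of_subset_right
        (Set.singleton_subset_iff.2 hw)]
    rwa [hset] at hconn
  have hI1 : ∀ u : ↥U, Disjoint I (φ u.val) := fun u =>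
    hId.mono_right ((Set.subset_iUnion φ u.val).trans Set.subset_union_left)
  have hI2 : ∀ v : ↥U', Disjoint I (φ' v.val) := fun v =>
    hId.mono_right ((Set.subset_iUnion φ' v.val).trans Set.subset_union_right)
  have hAB : ∀ (u : ↥U) (v : ↥U'), Disjoint (φ u.val) (φ' v.val) := fun u v =>
    hd.mono (Set.subset_iUnion φ u.val) (Set.subset_iUnion φ' v.val)
  have hedge : ∃ p ∈ φ w ∪ I, ∃ q ∈ φ' w', G.Adj p q := by
    refine ⟨z, ?_, y, hw', hzy⟩
    rcases hz with hz | hz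
    · exact Or.inl (hz ▸ hw)
    · exact Or.inr hz
  have hmodel := model_join (w₁ := (⟨w, hwU⟩ : ↥U)) (w₂ := (⟨w', hwU'⟩ : ↥U'))
    hmU hmU' I hIconn2 hI1 hI2 hAB hedge
  -- finiteness
  haveI hWfin : Finite W := model_finite hm
  haveI hWfin' : Finite W' := model_finite hm'
  haveI : Finite (↥U ⊕ ↥U') := by infer_instance
  -- the longer necklace minor
  have hhas : HasNecklaceMinor F G (a + b) :=
    ⟨↥U ⊕ ↥U', Fintype.ofFinite _, joinGraph (N.induce U) (N'.induce U') ⟨w, hwU⟩ ⟨w', hwU'⟩,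
      ⟨_, hjoin⟩, ⟨_, hmodel⟩⟩
  -- contradiction with maximality
  have hbdd : BddAbove {t | HasNecklaceMinor F G t} := by
    by_contra hnb
    rw [necklaceMinorNumber, csSup_of_not_bddAbove hnb, csSup_empty] at hnm
    simp only [Nat.bot_eq_zero] at hnm
    omega
  have hle : a + b ≤ t := hnm ▸ le_csSup hbdd hhas
  omega
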